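/- Let D be a digraph of order n with out-radius r >= 2. Then the number of arcs of D satisfies |A(D)| <= n(n-r) + (r^2 - r - 2)/2. -/

import Mathlib

variable {V : Type*}

/-- `ReachWithin A k u v` means the directed distance from `u` to `v` is at most `k`. -/
def ReachWithin (A : V → V → Prop) : ℕ → V → V → Prop
  | 0, u, v => u = v
  | k+1, u, v => u = v ∨ ∃ w, A u w ∧ ReachWithin A k w v

/-- out-eccentricity of `v` is at most `r`. -/
def outEccLe (A : V → V → Prop) (r : ℕ) (v : V) : Prop :=
  ∀ u, ReachWithin A r v u

/-- in-eccentricity of `v` is at most `r`. -/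
def inEccLe (A : V → V → Prop) (r : ℕ) (v : V) : Prop :=
  ∀ u, ReachWithin A r u v

/-- The out-radius of the digraph `A` equals `r`. -/
def outRadiusIs (A : V → V → Prop) (r : ℕ) : Prop :=
  (∃ v, outEccLe A r v) ∧ ∀ v, ¬ outEccLe A (r - 1) v

/-- A digraph is strongly connected (biconnected) if every vertex reaches every other. -/
def StronglyConnected (A : V → V → Prop) : Prop :=
  ∀ u v, ∃ k, ReachWithin A k u v

/-- Number of arcs of the digraph. -/
noncomputable def arcCard (A : V → V → Prop) : ℕ :=
  {p : V × V | A p.1 p.2}.ncard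

noncomputable def outDeg (A : V → V → Prop) (v : V) : ℕ :=
  {w | A v w}.ncard

noncomputable def inDeg (A : V → V → Prop) (v : V) : ℕ :=
  {w | A w v}.ncard

noncomputable def totalDeg (A : V → V → Prop) (v : V) : ℕ :=
  outDeg A v + inDeg A v

/-- The directed distance from `u` to `v` equals `k`. -/
def DistEq (A : V → V → Prop) (k : ℕ) (u v : V) : Prop :=
  ReachWithin A k u v ∧ ∀ j < k, ¬ ReachWithin A j u v

/-- out-eccentricity as a natural number. -/
noncomputable def outEcc (A : V → V → Prop) (v : V) : ℕ :=
  sInf {k | outEccLe A k v}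

/-- in-eccentricity as a natural number. -/
noncomputable def inEcc (A : V → V → Prop) (v : V) : ℕ :=
  sInf {k | inEccLe A k v}

/-- `P` is a bipartition of the digraph `A`: every arc joins the two classes. -/
def Bipartition (A : V → V → Prop) (P : V → Prop) : Prop :=
  ∀ u v, A u v → (P u ↔ ¬ P v)


set_option maxHeartbeats 1600000
set_option linter.unusedSectionVars false
set_option linter.unusedVariables false
set_option linter.unusedTactic false
open Finset

section Reach
variable {A : V → V → Prop}

lemma reachWithin_refl (k : ℕ) (u : V) : ReachWithin A k u u := by
  cases k with
  | zero => rfl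
  | succ k => exact Or.inl rfl

lemma reachWithin_succ {k : ℕ} {u v : V} (h : ReachWithin A k u v) :
    ReachWithin A (k+1) u v := by
  induction k generalizing u with
  | zero => exact Or.inl h
  | succ k ih =>
    rcases h with h | ⟨w, hw, h⟩
    · exact Or.inl h
    · exact Or.inr ⟨w, hw, ih h⟩

lemma reachWithin_mono {j k : ℕ} (h : j ≤ k) {u v : V} (hr : ReachWithin A j u v) :
    ReachWithin A k u v := by
  induction k, h using Nat.le_induction with
  | base => exact hr
  | succ k _ ih => exact reachWithin_succ ih

lemma reachWithin_trans {a b : ℕ} {u w x : V} (h1 : ReachWithin A a u w)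
    (h2 : ReachWithin A b w x) : ReachWithin A (a+b) u x := by
  induction a generalizing u with
  | zero => cases h1; simpa using h2
  | succ a ih =>
    rcases h1 with rfl | ⟨y, hy, h⟩
    · exact reachWithin_mono (by omega) h2
    · have : ReachWithin A ((a+b)+1) u x := Or.inr ⟨y, hy, ih h⟩
      have he : a + 1 + b = (a+b)+1 := by omega
      rwa [he]

lemma reachWithin_snoc {k : ℕ} {u w x : V} (h : ReachWithin A k u w) (ha : A w x) :
    ReachWithin A (k+1) u x :=
  reachWithin_trans h (Or.inr ⟨x, ha, rfl⟩)

lemma reachWithin_succ_back {k : ℕ} {u v : V} (h : ReachWithin A (k+1) u v) :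
    u = v ∨ ∃ w, ReachWithin A k u w ∧ A w v := by
  induction k generalizing u with
  | zero =>
    rcases h with h | ⟨w, hw, rfl⟩
    · exact Or.inl h
    · exact Or.inr ⟨u, rfl, hw⟩
  | succ k ih =>
    rcases h with h | ⟨w, huw, h⟩
    · exact Or.inl h
    · rcases ih h with rfl | ⟨y, hwy, hyv⟩
      · exact Or.inr ⟨u, reachWithin_refl _ _, huw⟩
      · exact Or.inr ⟨y, Or.inr ⟨w, huw, hwy⟩, hyv⟩

end Reach

noncomputable def lev (A : V → V → Prop) (z u : V) : ℕ := sInf {k | ReachWithin A k z u}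

section Lev
variable {A : V → V → Prop} {z : V}

lemma lev_spec {u : V} (h : ∃ k, ReachWithin A k z u) : ReachWithin A (lev A z u) z u :=
  Nat.sInf_mem h

lemma lev_le {u : V} {k : ℕ} (h : ReachWithin A k z u) : lev A z u ≤ k :=
  Nat.sInf_le h

lemma lev_self : lev A z z = 0 :=
  Nat.le_zero.mp (lev_le (reachWithin_refl 0 z))

lemma eq_of_lev_eq_zero {u : V} (h : ∃ k, ReachWithin A k z u) (h0 : lev A z u = 0) :
    z = u := by
  have := lev_spec h
  rwa [h0] at this

lemma lev_arc {u w : V} (h : ∃ k, ReachWithin A k z u) (ha : A u w) :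
    lev A z w ≤ lev A z u + 1 :=
  lev_le (reachWithin_snoc (lev_spec h) ha)

lemma exists_lev_pred (htot : ∀ x, ∃ k, ReachWithin A k z x) {j : ℕ} {u : V}
    (hu : lev A z u = j + 1) : ∃ w, lev A z w = j := by
  have h := lev_spec (htot u)
  rw [hu] at h
  rcases reachWithin_succ_back h with rfl | ⟨w, hw, haw⟩
  · rw [lev_self] at hu; omega
  · refine ⟨w, ?_⟩
    have h1 : lev A z w ≤ j := lev_le hw
    rcases Nat.lt_or_ge (lev A z w) j with hlt | hge
    · exfalso
      have h2 : ReachWithin A (lev A z w + 1) z u :=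
        reachWithin_snoc (lev_spec ⟨j, hw⟩) haw
      have := lev_le h2
      omega
    · omega

lemma exists_lev_eq (htot : ∀ x, ∃ k, ReachWithin A k z x) {J : ℕ}
    (hJ : ∃ u, lev A z u = J) : ∀ i, i ≤ J → ∃ u, lev A z u = i := by
  induction J with
  | zero =>
    intro i hi
    rw [Nat.le_zero.mp hi] at *; exact hJ
  | succ J ih =>
    intro i hi
    rcases Nat.eq_or_lt_of_le hi with rfl | hlt
    · exact hJ
    · obtain ⟨u, hu⟩ := hJ
      exact ih (exists_lev_pred htot hu) i (by omega)

end Lev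


section Fibers
variable [Fintype V] [DecidableEq V]

lemma fiber_disj (L : V → ℕ) : ∀ x ∈ range (r+1), ∀ y ∈ range (r+1), x ≠ y →
    Disjoint (filter (fun w => L w = x) univ) (filter (fun w => L w = y) univ) := by
  intro i _ j _ hij
  simp only [Finset.disjoint_left, Finset.mem_filter]
  rintro a ⟨_, rfl⟩ ⟨_, h⟩
  exact hij h

lemma fiber_sum_le (L : V → ℕ) (r : ℕ) :
    ∑ i ∈ range (r+1), (univ.filter (fun w => L w = i)).card ≤ Fintype.card V := by
  classical
  rw [← Finset.card_biUnion (fiber_disj L)]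
  exact (Finset.card_le_univ _).trans_eq Finset.card_univ

lemma fiber_sum_eq (L : V → ℕ) (r : ℕ) (hle : ∀ w, L w ≤ r) :
    ∑ i ∈ range (r+1), (univ.filter (fun w => L w = i)).card = Fintype.card V := by
  classical
  rw [← Finset.card_biUnion (fiber_disj L), ← Finset.card_univ]
  congr 1
  apply Finset.eq_univ_iff_forall.mpr
  intro w
  simp only [Finset.mem_biUnion, Finset.mem_range, Finset.mem_filter]
  exact ⟨L w, by have := hle w; omega, Finset.mem_univ w, rfl⟩

lemma fiber_one_card (L : V → ℕ) (r : ℕ) (hr : 1 ≤ r)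
    (hsurj : ∀ i, i ≤ r → ∃ u, L u = i) :
    (univ.filter (fun w => L w = 1)).card + r ≤ Fintype.card V := by
  classical
  have h1 : (1 : ℕ) ∈ range (r+1) := by simp; omega
  have hsplit := Finset.sum_eq_sum_sdiff_singleton_add h1
      (fun i => (univ.filter (fun w => L w = i)).card)
  have hlow : ∀ i ∈ range (r+1) \ {1}, 1 ≤ (univ.filter (fun w => L w = i)).card := by
    intro i hi
    simp only [Finset.mem_sdiff, Finset.mem_range] at hi
    obtain ⟨u, hu⟩ := hsurj i (by omega)
    have : u ∈ univ.filter (fun w => L w = i) := by simp [hu]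
    exact Finset.card_pos.mpr ⟨u, this⟩
  have hcard : (range (r+1) \ {1}).card = r := by
    rw [Finset.card_sdiff_of_subset (by simpa using h1)]
    simp
  have hns := Finset.card_nsmul_le_sum (range (r+1) \ {1}) _ 1 hlow
  rw [hcard, smul_eq_mul, mul_one] at hns
  have hs := fiber_sum_le L r
  omega

end Fibers

lemma arcCard_eq_sum [Fintype V] [DecidableEq V] (A : V → V → Prop)
    [DecidablePred fun p : V × V => A p.1 p.2] [∀ u, DecidablePred (A u)] :
    arcCard A = ∑ u : V, (univ.filter (fun w => A u w)).card := by
  classical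
  rw [arcCard, Set.ncard_eq_toFinset_card']
  rw [Set.toFinset_setOf]
  rw [Finset.card_eq_sum_card_fiberwise
    (f := Prod.fst) (t := univ) (fun p _ => Finset.mem_univ _)]
  apply Finset.sum_congr rfl
  intro u _
  apply Finset.card_bij (fun p _ => p.2)
  · intro p hp
    simp only [Finset.mem_filter, Finset.mem_univ, true_and] at hp ⊢
    rcases hp with ⟨h1, h2⟩
    rwa [h2] at h1
  · intro p hp p' hp' he
    simp only [Finset.mem_filter] at hp hp'
    exact Prod.ext (hp.2.trans hp'.2.symm) he
  · intro w hw
    simp only [Finset.mem_filter, Finset.mem_univ, true_and] at hw ⊢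
    exact ⟨(u, w), ⟨hw, rfl⟩, rfl⟩


lemma key_main (r : ℕ) (sN nN : ℕ → ℕ) (hr : 2 ≤ r) (c₀ : ℤ)
    (hc : 2*c₀ = ((r:ℤ)-2)*((r:ℤ)+1))
    (hle : ∀ ℓ, sN ℓ ≤ nN ℓ)
    (hpos : ∀ ℓ ∈ range (r+1), 1 ≤ nN ℓ)
    (hs0 : sN 0 = 0) (hn0 : nN 0 = 1)
    (hV0 : (∑ ℓ ∈ (range (r+1)).filter (fun ℓ => 1 ≤ sN ℓ ∧ 2 ≤ ℓ), ((sN ℓ:ℤ) - 1))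
        ≤ (∑ ℓ ∈ range (r+1), (nN ℓ:ℤ)) - r - nN 1)
    (hq1 : 1 ≤ (r:ℤ) - 1 - ((∑ ℓ ∈ range (r+1), (nN ℓ:ℤ)) - ∑ ℓ ∈ range (r+1), (sN ℓ:ℤ)))
    (ht1 : 1 ≤ (∑ ℓ ∈ range (r+1), (nN ℓ:ℤ)) - ∑ ℓ ∈ range (r+1), (sN ℓ:ℤ)) :
    (∑ ℓ ∈ range (r+1), (sN ℓ:ℤ)) *
      ((r:ℤ) - 1 - ((∑ ℓ ∈ range (r+1), (nN ℓ:ℤ)) - ∑ ℓ ∈ range (r+1), (sN ℓ:ℤ)))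
    ≤ (∑ ℓ ∈ range (r+1), (sN ℓ:ℤ) *
         (∑ j ∈ (range (r+1)).filter (fun j => ¬ j ≤ ℓ+1), (sN j:ℤ)))
      + c₀ + ((∑ ℓ ∈ range (r+1), (nN ℓ:ℤ)) - r - nN 1) := by
  classical
  set I : Finset ℕ := range (r+1) with hI
  set s : ℤ := ∑ ℓ ∈ I, (sN ℓ:ℤ) with hs
  set n : ℤ := ∑ ℓ ∈ I, (nN ℓ:ℤ) with hn
  set q : ℤ := (r:ℤ) - 1 - (n - s) with hqdef
  set occ : Finset ℕ := I.filter (fun ℓ => 1 ≤ sN ℓ) with hocc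
  set k : ℤ := (occ.card : ℤ) with hk
  have hSnn : ∀ ℓ : ℕ, (0:ℤ) ≤ (sN ℓ:ℤ) := fun ℓ => Int.ofNat_nonneg _
  have hoccI : occ ⊆ I := Finset.filter_subset _ _
  have hocc0 : (0:ℕ) ∉ occ := by simp [hocc, hs0]
  have hXnn : ∀ ℓ ∈ occ, (0:ℤ) ≤ (sN ℓ:ℤ) - 1 := by
    intro ℓ hℓ
    have : 1 ≤ sN ℓ := (Finset.mem_filter.mp hℓ).2
    have : (1:ℤ) ≤ (sN ℓ:ℤ) := by exact_mod_cast this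
    linarith
  -- k + t ≥ r + 1
  have hkt : (r:ℤ) + 1 ≤ k + (n - s) := by
    have hts : n - s = ∑ ℓ ∈ I, ((nN ℓ:ℤ) - (sN ℓ:ℤ)) := by rw [Finset.sum_sub_distrib]
    have h1 : ∑ ℓ ∈ I \ occ, ((nN ℓ:ℤ) - (sN ℓ:ℤ)) ≤ ∑ ℓ ∈ I, ((nN ℓ:ℤ) - (sN ℓ:ℤ)) := by
      apply Finset.sum_le_sum_of_subset_of_nonneg (Finset.sdiff_subset)
      intro ℓ hℓ _
      have := hle ℓ
      have : (sN ℓ:ℤ) ≤ (nN ℓ:ℤ) := by exact_mod_cast this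
      linarith
    have h2 : ∀ ℓ ∈ I \ occ, (1:ℤ) ≤ (nN ℓ:ℤ) - (sN ℓ:ℤ) := by
      intro ℓ hℓ
      obtain ⟨hℓI, hℓno⟩ := Finset.mem_sdiff.mp hℓ
      have hzero : sN ℓ = 0 := by
        by_contra h
        exact hℓno (Finset.mem_filter.mpr ⟨hℓI, by omega⟩)
      have hp : 1 ≤ nN ℓ := hpos ℓ hℓI
      have : (1:ℤ) ≤ (nN ℓ:ℤ) := by exact_mod_cast hp
      simp [hzero]; linarith
    have h3 := Finset.card_nsmul_le_sum (I \ occ) _ 1 h2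
    have hcard : (I \ occ).card = (r+1) - occ.card := by
      rw [Finset.card_sdiff_of_subset hoccI, hI, Finset.card_range]
    have hole : occ.card ≤ r + 1 := by
      calc occ.card ≤ I.card := Finset.card_le_card hoccI
        _ = r + 1 := by rw [hI, Finset.card_range]
    have h4 : ((I \ occ).card : ℤ) = (r:ℤ) + 1 - k := by
      rw [hcard]
      push_cast [Nat.cast_sub hole]
      ring
    rw [nsmul_eq_mul, mul_one] at h3
    rw [h4] at h3
    rw [hts]
    linarith
  have hq2k : q + 2 ≤ k := by linarith
  have hkpos : 0 < occ.card := by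
    have h3 : (0:ℤ) < k := by linarith
    rw [hk] at h3; exact_mod_cast h3

  -- restrict sums to occ
  have hzero_out : ∀ ℓ ∈ I, ℓ ∉ occ → sN ℓ = 0 := by
    intro ℓ hℓI hℓno
    by_contra h
    exact hℓno (Finset.mem_filter.mpr ⟨hℓI, by omega⟩)
  have hrestrict : ∑ ℓ ∈ occ, (sN ℓ:ℤ) * (∑ j ∈ I.filter (fun j => ¬ j ≤ ℓ+1), (sN j:ℤ))
      = ∑ ℓ ∈ I, (sN ℓ:ℤ) * (∑ j ∈ I.filter (fun j => ¬ j ≤ ℓ+1), (sN j:ℤ)) := by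
    apply Finset.sum_subset hoccI
    intro ℓ hℓI hℓno
    simp [hzero_out ℓ hℓI hℓno]
  have hsocc : s = ∑ ℓ ∈ occ, (sN ℓ:ℤ) := by
    rw [hs]; symm
    apply Finset.sum_subset hoccI
    intro ℓ hℓI hℓno
    simp [hzero_out ℓ hℓI hℓno]
  have hinner : ∀ ℓ : ℕ, ∑ j ∈ occ.filter (fun j => ¬ j ≤ ℓ+1), (sN j:ℤ)
      ≤ ∑ j ∈ I.filter (fun j => ¬ j ≤ ℓ+1), (sN j:ℤ) := by
    intro ℓ
    apply Finset.sum_le_sum_of_subset_of_nonneg (Finset.filter_subset_filter _ hoccI)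
    intro j _ _; exact hSnn j
  have hexp : ∀ ℓ : ℕ, ∑ j ∈ occ.filter (fun j => ¬ j ≤ ℓ+1), (sN j:ℤ)
      = ((occ.filter (fun j => ¬ j ≤ ℓ+1)).card : ℤ)
        + ∑ j ∈ occ.filter (fun j => ¬ j ≤ ℓ+1), ((sN j:ℤ) - 1) := by
    intro ℓ
    rw [Finset.sum_sub_distrib]
    simp
  have hYnn : ∀ ℓ : ℕ, 0 ≤ ∑ j ∈ occ.filter (fun j => ¬ j ≤ ℓ+1), ((sN j:ℤ) - 1) := by
    intro ℓ
    apply Finset.sum_nonneg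
    intro j hj
    exact hXnn j (Finset.mem_of_mem_filter j hj)
  have hswap : ∑ ℓ ∈ occ, ∑ j ∈ occ.filter (fun j => ¬ j ≤ ℓ+1), ((sN j:ℤ) - 1)
      = ∑ j ∈ occ, ((sN j:ℤ) - 1) * ((occ.filter (fun ℓ => ¬ j ≤ ℓ+1)).card : ℤ) := by
    have h1 : ∀ ℓ ∈ occ, ∑ j ∈ occ.filter (fun j => ¬ j ≤ ℓ+1), ((sN j:ℤ) - 1)
        = ∑ j ∈ occ, if ¬ j ≤ ℓ+1 then ((sN j:ℤ) - 1) else 0 := by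
      intro ℓ _; rw [Finset.sum_filter]
    rw [Finset.sum_congr rfl h1, Finset.sum_comm]
    apply Finset.sum_congr rfl
    intro j _
    rw [← Finset.sum_filter, Finset.sum_const, nsmul_eq_mul, mul_comm]
  -- per-level bound for the X part
  have hper : ∀ ℓ ∈ occ, q * ((sN ℓ:ℤ) - 1)
      ≤ ((sN ℓ:ℤ) - 1) * ((occ.filter (fun j => ¬ j ≤ ℓ+1)).card : ℤ)
        + ((sN ℓ:ℤ) - 1) * ((occ.filter (fun j => ¬ ℓ ≤ j+1)).card : ℤ)
        + (if 2 ≤ ℓ then ((sN ℓ:ℤ) - 1) else 0) := by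
    intro ℓ hℓ
    have hX := hXnn ℓ hℓ
    by_cases h2 : 2 ≤ ℓ
    · have htri : occ \ {ℓ-1, ℓ, ℓ+1} ⊆
          (occ.filter (fun j => ¬ j ≤ ℓ+1)) ∪ (occ.filter (fun j => ¬ ℓ ≤ j+1)) := by
        intro j hj
        obtain ⟨hjo, hjn⟩ := Finset.mem_sdiff.mp hj
        simp only [Finset.mem_insert, Finset.mem_singleton] at hjn
        push_neg at hjn
        simp only [Finset.mem_union, Finset.mem_filter]
        obtain ⟨a1, a2, a3⟩ := hjn
        have : ¬ j ≤ ℓ+1 ∨ ¬ ℓ ≤ j+1 := by omega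
        rcases this with h | h
        · exact Or.inl ⟨hjo, h⟩
        · exact Or.inr ⟨hjo, h⟩
      have htric : ({ℓ-1, ℓ, ℓ+1} : Finset ℕ).card ≤ 3 := by
        calc ({ℓ-1, ℓ, ℓ+1} : Finset ℕ).card ≤ ({ℓ, ℓ+1} : Finset ℕ).card + 1 :=
            Finset.card_insert_le _ _
          _ ≤ (({ℓ+1} : Finset ℕ).card + 1) + 1 :=
            Nat.add_le_add_right (Finset.card_insert_le _ _) 1
          _ ≤ 3 := by simp
      have hsd : occ.card ≤ (occ \ {ℓ-1, ℓ, ℓ+1}).card + 3 := by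
        have h0 : occ.card ≤ (occ \ {ℓ-1, ℓ, ℓ+1}).card + ({ℓ-1, ℓ, ℓ+1} : Finset ℕ).card :=
          Finset.card_le_card_sdiff_add_card
        omega
      have hun : (occ \ {ℓ-1, ℓ, ℓ+1}).card ≤
          (occ.filter (fun j => ¬ j ≤ ℓ+1)).card + (occ.filter (fun j => ¬ ℓ ≤ j+1)).card := by
        calc _ ≤ ((occ.filter (fun j => ¬ j ≤ ℓ+1)) ∪ (occ.filter (fun j => ¬ ℓ ≤ j+1))).card :=
            Finset.card_le_card htri
        _ ≤ _ := Finset.card_union_le _ _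
      have hgpgm : k - 3 ≤ ((occ.filter (fun j => ¬ j ≤ ℓ+1)).card : ℤ)
          + ((occ.filter (fun j => ¬ ℓ ≤ j+1)).card : ℤ) := by
        rw [hk]
        have := hsd
        have := hun
        push_cast
        omega
      have hqle : q ≤ ((occ.filter (fun j => ¬ j ≤ ℓ+1)).card : ℤ)
          + ((occ.filter (fun j => ¬ ℓ ≤ j+1)).card : ℤ) + 1 := by linarith
      rw [if_pos h2]
      nlinarith [mul_le_mul_of_nonneg_right hqle hX]
    · have hℓ0 : ℓ ≠ 0 := fun h => hocc0 (h ▸ hℓ)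
      have hℓ1 : ℓ = 1 := by omega
      subst hℓ1
      have hsub12 : occ \ {1, 2} ⊆ occ.filter (fun j => ¬ j ≤ 2) := by
        intro j hj
        obtain ⟨hjo, hjn⟩ := Finset.mem_sdiff.mp hj
        simp only [Finset.mem_insert, Finset.mem_singleton] at hjn
        push_neg at hjn
        have hj0 : j ≠ 0 := fun h => hocc0 (h ▸ hjo)
        refine Finset.mem_filter.mpr ⟨hjo, by omega⟩
      have hsd : occ.card ≤ (occ \ {1, 2}).card + 2 := by
        have h0 : occ.card ≤ (occ \ {1, 2}).card + ({1, 2} : Finset ℕ).card :=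
          Finset.card_le_card_sdiff_add_card
        have h1 : ({1, 2} : Finset ℕ).card ≤ 2 :=
          le_trans (Finset.card_insert_le _ _) (by simp)
        omega
      have hgp : k - 2 ≤ ((occ.filter (fun j => ¬ j ≤ 1+1)).card : ℤ) := by
        rw [hk]
        have := Finset.card_le_card hsub12
        push_cast
        omega
      have hqle : q ≤ ((occ.filter (fun j => ¬ j ≤ 1+1)).card : ℤ) := by linarith
      rw [if_neg h2]
      have hgm : (0:ℤ) ≤ ((occ.filter (fun j => ¬ (1:ℕ) ≤ j+1)).card : ℤ) := Int.ofNat_nonneg _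
      nlinarith [mul_le_mul_of_nonneg_right hqle hX]
  -- cover sum bound
  have hcov : ∑ ℓ ∈ occ, (if 2 ≤ ℓ then ((sN ℓ:ℤ) - 1) else 0) ≤ n - r - (nN 1:ℤ) := by
    rw [← Finset.sum_filter]
    have : occ.filter (fun ℓ => 2 ≤ ℓ) = I.filter (fun ℓ => 1 ≤ sN ℓ ∧ 2 ≤ ℓ) := by
      rw [hocc, Finset.filter_filter]
    rw [this]
    exact hV0
  -- sum the per-level bounds
  have hXsum : q * (∑ ℓ ∈ occ, ((sN ℓ:ℤ) - 1))
      ≤ (∑ ℓ ∈ occ, ((sN ℓ:ℤ) - 1) * ((occ.filter (fun j => ¬ j ≤ ℓ+1)).card : ℤ))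
        + (∑ ℓ ∈ occ, ((sN ℓ:ℤ) - 1) * ((occ.filter (fun j => ¬ ℓ ≤ j+1)).card : ℤ))
        + (n - r - (nN 1:ℤ)) := by
    have h1 := Finset.sum_le_sum hper
    rw [Finset.mul_sum]
    rw [Finset.sum_add_distrib, Finset.sum_add_distrib] at h1
    linarith [hcov]
  -- rank machinery for the constant part
  have hgplow : ∀ ℓ ∈ occ,
      k - 1 - ((occ.filter (fun j => j ≤ ℓ)).card:ℤ) ≤ ((occ.filter (fun j => ¬ j ≤ ℓ+1)).card:ℤ) := by
    intro ℓ hℓ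
    have hc1 : (occ.filter (fun j => j ≤ ℓ+1)).card + (occ.filter (fun j => ¬ j ≤ ℓ+1)).card
        = occ.card := Finset.card_filter_add_card_filter_not _
    have hsub : occ.filter (fun j => j ≤ ℓ+1) ⊆ insert (ℓ+1) (occ.filter (fun j => j ≤ ℓ)) := by
      intro j hj
      obtain ⟨hjo, hjle⟩ := Finset.mem_filter.mp hj
      rcases Nat.eq_or_lt_of_le hjle with h | h
      · rw [h]; exact Finset.mem_insert_self _ _
      · exact Finset.mem_insert_of_mem (Finset.mem_filter.mpr ⟨hjo, by omega⟩)
    have hc2 : (occ.filter (fun j => j ≤ ℓ+1)).card ≤ (occ.filter (fun j => j ≤ ℓ)).card + 1 :=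
      le_trans (Finset.card_le_card hsub) (Finset.card_insert_le _ _)
    rw [hk]
    push_cast
    omega
  have hne : occ.Nonempty := Finset.card_pos.mp hkpos
  have hMocc : occ.max' hne ∈ occ := occ.max'_mem hne
  have hrankM : occ.filter (fun j => j ≤ occ.max' hne) = occ :=
    Finset.filter_true_of_mem (fun j hj => occ.le_max' j hj)
  have hPstar : (∑ ℓ ∈ occ, (k - 1 - ((occ.filter (fun j => j ≤ ℓ)).card:ℤ))) + 1
      ≤ ∑ ℓ ∈ occ, ((occ.filter (fun j => ¬ j ≤ ℓ+1)).card:ℤ) := by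
    have hdiff : ∀ ℓ ∈ occ, (0:ℤ) ≤ ((occ.filter (fun j => ¬ j ≤ ℓ+1)).card:ℤ)
        - (k - 1 - ((occ.filter (fun j => j ≤ ℓ)).card:ℤ)) := by
      intro ℓ hℓ; linarith [hgplow ℓ hℓ]
    have hMterm : (1:ℤ) ≤ ((occ.filter (fun j => ¬ j ≤ occ.max' hne + 1)).card:ℤ)
        - (k - 1 - ((occ.filter (fun j => j ≤ occ.max' hne)).card:ℤ)) := by
      rw [hrankM, ← hk]
      have : (0:ℤ) ≤ ((occ.filter (fun j => ¬ j ≤ occ.max' hne + 1)).card:ℤ) :=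
        Int.ofNat_nonneg _
      linarith
    have hsingle := Finset.single_le_sum hdiff hMocc
    have := le_trans hMterm hsingle
    rw [Finset.sum_sub_distrib] at this
    linarith
  have hranksum : 2 * (∑ ℓ ∈ occ, ((occ.filter (fun j => j ≤ ℓ)).card:ℤ)) = k^2 + k := by
    have hrl : ∀ ℓ ∈ occ, ((occ.filter (fun j => j ≤ ℓ)).card:ℤ)
        = ((occ.filter (fun j => j < ℓ)).card:ℤ) + 1 := by
      intro ℓ hℓ
      have he : occ.filter (fun j => j ≤ ℓ) = insert ℓ (occ.filter (fun j => j < ℓ)) := by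
        ext j
        simp only [Finset.mem_filter, Finset.mem_insert]
        constructor
        · rintro ⟨hjo, hj⟩
          rcases Nat.eq_or_lt_of_le hj with h | h
          · exact Or.inl h
          · exact Or.inr ⟨hjo, h⟩
        · rintro (rfl | ⟨hjo, hj⟩)
          · exact ⟨hℓ, le_refl _⟩
          · exact ⟨hjo, le_of_lt hj⟩
      rw [he, Finset.card_insert_of_notMem (by simp)]
      push_cast; ring
    have hlh : ∀ ℓ ∈ occ, ((occ.filter (fun j => j < ℓ)).card:ℤ)
        + ((occ.filter (fun j => ℓ < j)).card:ℤ) + 1 = k := by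
      intro ℓ hℓ
      have hc1 : (occ.filter (fun j => j ≤ ℓ)).card + (occ.filter (fun j => ¬ j ≤ ℓ)).card
          = occ.card := Finset.card_filter_add_card_filter_not _
      have hfe : occ.filter (fun j => ¬ j ≤ ℓ) = occ.filter (fun j => ℓ < j) := by
        apply Finset.filter_congr
        intro j _
        simp [Nat.not_le]
      rw [hfe] at hc1
      have := hrl ℓ hℓ
      rw [hk]
      push_cast at this ⊢
      omega
    have hsym : (∑ ℓ ∈ occ, ((occ.filter (fun j => j < ℓ)).card:ℤ))
        = ∑ ℓ ∈ occ, ((occ.filter (fun j => ℓ < j)).card:ℤ) := by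
      have e1 : ∀ ℓ ∈ occ, ((occ.filter (fun j => j < ℓ)).card:ℤ)
          = ∑ j ∈ occ, if j < ℓ then (1:ℤ) else 0 := by
        intro ℓ _
        rw [Finset.sum_boole]
      have e2 : ∀ ℓ ∈ occ, ((occ.filter (fun j => ℓ < j)).card:ℤ)
          = ∑ j ∈ occ, if ℓ < j then (1:ℤ) else 0 := by
        intro ℓ _
        rw [Finset.sum_boole]
      rw [Finset.sum_congr rfl e1, Finset.sum_congr rfl e2, Finset.sum_comm]
    have hsum1 : ∑ ℓ ∈ occ, (((occ.filter (fun j => j < ℓ)).card:ℤ)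
        + ((occ.filter (fun j => ℓ < j)).card:ℤ) + 1) = k * k := by
      rw [Finset.sum_congr rfl hlh, Finset.sum_const, nsmul_eq_mul, ← hk]
    rw [Finset.sum_add_distrib, Finset.sum_add_distrib] at hsum1
    simp only [Finset.sum_const, nsmul_eq_mul, mul_one] at hsum1
    rw [← hk] at hsum1
    have hsumr : ∑ ℓ ∈ occ, ((occ.filter (fun j => j ≤ ℓ)).card:ℤ)
        = (∑ ℓ ∈ occ, ((occ.filter (fun j => j < ℓ)).card:ℤ)) + k := by
      rw [Finset.sum_congr rfl hrl, Finset.sum_add_distrib]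
      simp only [Finset.sum_const, nsmul_eq_mul, mul_one]
      try rw [← hk]
    rw [hsumr]
    nlinarith [hsym, hsum1]
  have h2P : k^2 - 3*k + 2 ≤ 2 * ∑ ℓ ∈ occ, ((occ.filter (fun j => ¬ j ≤ ℓ+1)).card:ℤ) := by
    have e1 : ∑ ℓ ∈ occ, (k - 1 - ((occ.filter (fun j => j ≤ ℓ)).card:ℤ))
        = k*(k-1) - ∑ ℓ ∈ occ, ((occ.filter (fun j => j ≤ ℓ)).card:ℤ) := by
      rw [Finset.sum_sub_distrib, Finset.sum_const, nsmul_eq_mul]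
      try rw [← hk]
      try ring
    rw [e1] at hPstar
    linarith [hranksum]
  have hkq : k * q ≤ (∑ ℓ ∈ occ, ((occ.filter (fun j => ¬ j ≤ ℓ+1)).card:ℤ)) + c₀ := by
    have hA : (0:ℤ) ≤ (k - q - 1) * (k - q - 2) :=
      mul_nonneg (by linarith) (by linarith)
    have hqr : q ≤ (r:ℤ) - 2 := by rw [hqdef]; linarith
    have hB : (0:ℤ) ≤ ((r:ℤ) - 2 - q) * ((r:ℤ) + 1 + q) :=
      mul_nonneg (by linarith) (by linarith)
    nlinarith [h2P, hc, hA, hB]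
  -- assemble
  have hsX : s = k + ∑ ℓ ∈ occ, ((sN ℓ:ℤ) - 1) := by
    rw [hsocc, Finset.sum_sub_distrib]
    simp only [Finset.sum_const, nsmul_eq_mul, mul_one]
    rw [← hk]
    ring
  have hcore : ∑ ℓ ∈ occ, (((occ.filter (fun j => ¬ j ≤ ℓ+1)).card:ℤ)
        + ((sN ℓ:ℤ) - 1) * ((occ.filter (fun j => ¬ j ≤ ℓ+1)).card:ℤ)
        + ∑ j ∈ occ.filter (fun j => ¬ j ≤ ℓ+1), ((sN j:ℤ) - 1))
      ≤ ∑ ℓ ∈ occ, (sN ℓ:ℤ) * (∑ j ∈ I.filter (fun j => ¬ j ≤ ℓ+1), (sN j:ℤ)) := by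
    apply Finset.sum_le_sum
    intro ℓ hℓ
    have h1 : (sN ℓ:ℤ) * (∑ j ∈ occ.filter (fun j => ¬ j ≤ ℓ+1), (sN j:ℤ))
        ≤ (sN ℓ:ℤ) * (∑ j ∈ I.filter (fun j => ¬ j ≤ ℓ+1), (sN j:ℤ)) :=
      mul_le_mul_of_nonneg_left (hinner ℓ) (hSnn ℓ)
    have h2 : ((occ.filter (fun j => ¬ j ≤ ℓ+1)).card:ℤ)
        + ((sN ℓ:ℤ) - 1) * ((occ.filter (fun j => ¬ j ≤ ℓ+1)).card:ℤ)
        + (∑ j ∈ occ.filter (fun j => ¬ j ≤ ℓ+1), ((sN j:ℤ) - 1))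
        ≤ (sN ℓ:ℤ) * (∑ j ∈ occ.filter (fun j => ¬ j ≤ ℓ+1), (sN j:ℤ)) := by
      rw [hexp ℓ]
      have hX := hXnn ℓ hℓ
      have hY := hYnn ℓ
      nlinarith [hX, hY]
    linarith
  rw [← hrestrict]
  have hfinal1 : s * q = k * q + q * ∑ ℓ ∈ occ, ((sN ℓ:ℤ) - 1) := by
    rw [hsX]; ring
  rw [Finset.sum_add_distrib, Finset.sum_add_distrib] at hcore
  rw [hswap] at hcore
  calc s * q = k * q + q * ∑ ℓ ∈ occ, ((sN ℓ:ℤ) - 1) := hfinal1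
    _ ≤ ((∑ ℓ ∈ occ, ((occ.filter (fun j => ¬ j ≤ ℓ+1)).card:ℤ)) + c₀)
        + ((∑ ℓ ∈ occ, ((sN ℓ:ℤ) - 1) * ((occ.filter (fun j => ¬ j ≤ ℓ+1)).card : ℤ))
          + (∑ ℓ ∈ occ, ((sN ℓ:ℤ) - 1) * ((occ.filter (fun j => ¬ ℓ ≤ j+1)).card : ℤ))
          + (n - r - (nN 1:ℤ))) := by
      have := hXsum
      linarith [hkq]
    _ ≤ (∑ ℓ ∈ occ, (sN ℓ:ℤ) * (∑ j ∈ I.filter (fun j => ¬ j ≤ ℓ+1), (sN j:ℤ)))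
        + c₀ + (n - r - (nN 1:ℤ)) := by
      linarith [hcore]


lemma key_numeric (r : ℕ) (hr : 2 ≤ r) (c₀ : ℤ) (hc : 2*c₀ = ((r:ℤ)-2)*((r:ℤ)+1))
    (sN nN : ℕ → ℕ)
    (hle : ∀ ℓ, sN ℓ ≤ nN ℓ)
    (hpos : ∀ ℓ ∈ range (r+1), 1 ≤ nN ℓ)
    (hs0 : sN 0 = 0) (hn0 : nN 0 = 1) :
    ∑ ℓ ∈ range (r+1), (sN ℓ : ℤ) *
        ((∑ j ∈ (range (r+1)).filter (fun j => j ≤ ℓ+1), (sN j : ℤ)) - 1)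
      ≤ (∑ ℓ ∈ range (r+1), (sN ℓ:ℤ)) * ((∑ ℓ ∈ range (r+1), (nN ℓ:ℤ)) - r) + c₀
        + ((∑ ℓ ∈ range (r+1), (nN ℓ:ℤ)) - r - nN 1) := by
  classical
  set I : Finset ℕ := range (r+1) with hI
  set s : ℤ := ∑ ℓ ∈ I, (sN ℓ:ℤ) with hs
  set n : ℤ := ∑ ℓ ∈ I, (nN ℓ:ℤ) with hn
  have hSnn : ∀ ℓ : ℕ, (0:ℤ) ≤ (sN ℓ:ℤ) := fun ℓ => Int.ofNat_nonneg _
  have hNS : ∀ ℓ : ℕ, (sN ℓ:ℤ) ≤ (nN ℓ:ℤ) := fun ℓ => by exact_mod_cast hle ℓ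
  have hsnn : 0 ≤ s := Finset.sum_nonneg fun ℓ _ => hSnn ℓ
  have hc0nn : 0 ≤ c₀ := by nlinarith [hc]
  have htsub : n - s = ∑ ℓ ∈ I, ((nN ℓ:ℤ) - (sN ℓ:ℤ)) := by
    rw [Finset.sum_sub_distrib]
  have ht1 : 1 ≤ n - s := by
    rw [htsub]
    have h0I : (0:ℕ) ∈ I := by simp [hI]
    have h := Finset.single_le_sum (f := fun ℓ : ℕ => (nN ℓ:ℤ) - (sN ℓ:ℤ))
      (fun ℓ _ => by have := hNS ℓ; linarith) h0I
    simp only [hs0, hn0] at h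
    simpa using h
  set P2 : Finset ℕ := I.filter (fun ℓ => ¬ ℓ < 2) with hP2
  have hP2card : (P2.card : ℤ) = (r:ℤ) - 1 := by
    have h1 : P2 = Ico 2 (r+1) := by
      ext j; simp [hP2, hI, Finset.mem_Ico]; omega
    rw [h1, Nat.card_Ico]
    have h2 : r + 1 - 2 = r - 1 := by omega
    rw [h2]
    have h3 : (1:ℕ) ≤ r := by omega
    push_cast [Nat.cast_sub h3]; ring
  have hV0eq : n - r - (nN 1:ℤ) = ∑ ℓ ∈ P2, ((nN ℓ:ℤ) - 1) := by
    have hsplit : n = (∑ ℓ ∈ I.filter (fun ℓ => ℓ < 2), (nN ℓ:ℤ)) + ∑ ℓ ∈ P2, (nN ℓ:ℤ) := by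
      rw [hn, ← Finset.sum_filter_add_sum_filter_not I (fun ℓ => ℓ < 2)]
    have hlow : I.filter (fun ℓ => ℓ < 2) = {0, 1} := by
      ext j; simp [hI]; omega
    rw [hlow, Finset.sum_pair (by norm_num)] at hsplit
    have hsub : ∑ ℓ ∈ P2, ((nN ℓ:ℤ) - 1) = (∑ ℓ ∈ P2, (nN ℓ:ℤ)) - P2.card := by
      rw [Finset.sum_sub_distrib]; simp
    rw [hsub, hP2card]
    simp only [hn0] at hsplit
    push_cast at hsplit ⊢
    linarith
  have hV0nn : 0 ≤ n - r - (nN 1:ℤ) := by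
    rw [hV0eq]
    apply Finset.sum_nonneg
    intro ℓ hℓ
    have h1 : 1 ≤ nN ℓ := hpos ℓ (Finset.mem_of_mem_filter ℓ hℓ)
    have h2 : (1:ℤ) ≤ (nN ℓ:ℤ) := by exact_mod_cast h1
    linarith
  have hbeta : ∀ ℓ : ℕ, (∑ j ∈ I.filter (fun j => j ≤ ℓ+1), (sN j:ℤ))
      = s - ∑ j ∈ I.filter (fun j => ¬ j ≤ ℓ+1), (sN j:ℤ) := by
    intro ℓ
    have := Finset.sum_filter_add_sum_filter_not I (fun j => j ≤ ℓ+1) (fun j => (sN j:ℤ))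
    rw [hs]; linarith
  have hLHS : ∑ ℓ ∈ I, (sN ℓ:ℤ) * ((∑ j ∈ I.filter (fun j => j ≤ ℓ+1), (sN j:ℤ)) - 1)
      = s*(s-1) - ∑ ℓ ∈ I, (sN ℓ:ℤ) * (∑ j ∈ I.filter (fun j => ¬ j ≤ ℓ+1), (sN j:ℤ)) := by
    have h1 : ∀ ℓ ∈ I, (sN ℓ:ℤ) * ((∑ j ∈ I.filter (fun j => j ≤ ℓ+1), (sN j:ℤ)) - 1)
        = (sN ℓ:ℤ) * (s-1) - (sN ℓ:ℤ) * (∑ j ∈ I.filter (fun j => ¬ j ≤ ℓ+1), (sN j:ℤ)) := by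
      intro ℓ _
      rw [hbeta ℓ]; ring
    rw [Finset.sum_congr rfl h1, Finset.sum_sub_distrib, ← Finset.sum_mul, ← hs]
  rw [hLHS]
  have hBignn : 0 ≤ ∑ ℓ ∈ I, (sN ℓ:ℤ) * (∑ j ∈ I.filter (fun j => ¬ j ≤ ℓ+1), (sN j:ℤ)) := by
    apply Finset.sum_nonneg
    intro ℓ _
    exact mul_nonneg (hSnn ℓ) (Finset.sum_nonneg fun j _ => hSnn j)
  have hmain : s * ((r:ℤ) - 1 - (n - s)) ≤
      (∑ ℓ ∈ I, (sN ℓ:ℤ) * (∑ j ∈ I.filter (fun j => ¬ j ≤ ℓ+1), (sN j:ℤ)))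
        + c₀ + (n - r - (nN 1:ℤ)) := by
    by_cases hq : 1 ≤ (r:ℤ) - 1 - (n - s)
    · have hV0 : (∑ ℓ ∈ I.filter (fun ℓ => 1 ≤ sN ℓ ∧ 2 ≤ ℓ), ((sN ℓ:ℤ) - 1))
          ≤ n - r - (nN 1:ℤ) := by
        rw [hV0eq]
        have hsub : I.filter (fun ℓ => 1 ≤ sN ℓ ∧ 2 ≤ ℓ) ⊆ P2 := by
          intro ℓ hℓ
          obtain ⟨hℓI, _, h2⟩ := Finset.mem_filter.mp hℓ
          exact Finset.mem_filter.mpr ⟨hℓI, by omega⟩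
        calc ∑ ℓ ∈ I.filter (fun ℓ => 1 ≤ sN ℓ ∧ 2 ≤ ℓ), ((sN ℓ:ℤ) - 1)
            ≤ ∑ ℓ ∈ I.filter (fun ℓ => 1 ≤ sN ℓ ∧ 2 ≤ ℓ), ((nN ℓ:ℤ) - 1) := by
              apply Finset.sum_le_sum
              intro ℓ _
              have := hNS ℓ
              linarith
          _ ≤ ∑ ℓ ∈ P2, ((nN ℓ:ℤ) - 1) := by
              apply Finset.sum_le_sum_of_subset_of_nonneg hsub
              intro ℓ hℓ _
              have h1 : 1 ≤ nN ℓ := hpos ℓ (Finset.mem_of_mem_filter ℓ hℓ)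
              have h2 : (1:ℤ) ≤ (nN ℓ:ℤ) := by exact_mod_cast h1
              linarith
      exact key_main r sN nN hr c₀ hc hle hpos hs0 hn0 hV0 hq ht1
    · push_neg at hq
      have hq0 : (r:ℤ) - 1 - (n - s) ≤ 0 := by linarith
      nlinarith [mul_nonneg hsnn (neg_nonneg.mpr hq0), hc0nn, hV0nn, hBignn]
  nlinarith [hmain]

/-- Fridman's theorem: a digraph of order `n` with out-radius `r ≥ 2` has at most
`n(n-r) + (r^2-r-2)/2` arcs. -/
theorem stmt2 [Fintype V] (A : V → V → Prop) (hirr : Irreflexive A)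
    (r : ℕ) (hr : 2 ≤ r) (hrad : outRadiusIs A r) :
    arcCard A ≤ Fintype.card V * (Fintype.card V - r) + (r ^ 2 - r - 2) / 2 := by
  classical
  obtain ⟨⟨v, hv⟩, hall⟩ := hrad
  have htotv : ∀ x : V, ∃ k, ReachWithin A k v x := fun x => ⟨r, hv x⟩
  have hLle : ∀ w, lev A v w ≤ r := fun w => lev_le (hv w)
  have hLv : lev A v v = 0 := lev_self
  have hdeepv : ∃ u, lev A v u = r := by
    have h := hall v
    simp only [outEccLe, not_forall] at h
    obtain ⟨u, hu⟩ := h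
    refine ⟨u, le_antisymm (hLle u) ?_⟩
    by_contra hcon
    push_neg at hcon
    exact hu (reachWithin_mono (by omega) (lev_spec (htotv u)))
  have hsurj : ∀ i, i ≤ r → ∃ u, lev A v u = i := exists_lev_eq htotv hdeepv
  have hnpos : ∀ i ∈ range (r+1), 1 ≤ (univ.filter (fun w => lev A v w = i)).card := by
    intro i hi
    simp only [Finset.mem_range] at hi
    obtain ⟨u, hu⟩ := hsurj i (by omega)
    exact Finset.card_pos.mpr ⟨u, by simp [hu]⟩
  have hnsum : ∑ i ∈ range (r+1), (univ.filter (fun w => lev A v w = i)).card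
      = Fintype.card V := fiber_sum_eq _ r hLle
  have hfib0 : univ.filter (fun w => lev A v w = 0) = {v} := by
    ext w
    simp only [Finset.mem_filter, Finset.mem_univ, true_and, Finset.mem_singleton]
    constructor
    · intro h0; exact (eq_of_lev_eq_zero (htotv w) h0).symm
    · rintro rfl; exact hLv
  have hn0 : (univ.filter (fun w => lev A v w = 0)).card = 1 := by rw [hfib0]; simp
  have hnr : r + 1 ≤ Fintype.card V := by
    rw [← hnsum]
    calc r + 1 = ∑ _i ∈ range (r+1), 1 := by simp
      _ ≤ _ := Finset.sum_le_sum hnpos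
  set Sf : Finset V := univ.filter (fun u => ¬ ∃ k, ReachWithin A k u v) with hSf
  have hvT : v ∉ Sf := by
    simp only [hSf, Finset.mem_filter, Finset.mem_univ, true_and, not_not]
    exact ⟨0, rfl⟩
  have hSclosed : ∀ u ∈ Sf, ∀ w, A u w → w ∈ Sf := by
    intro u hu w haw
    simp only [hSf, Finset.mem_filter, Finset.mem_univ, true_and] at hu ⊢
    rintro ⟨k, hk⟩
    exact hu ⟨k+1, Or.inr ⟨w, haw, hk⟩⟩
  have hs0 : (Sf.filter (fun w => lev A v w = 0)).card = 0 := by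
    rw [Finset.card_eq_zero]
    ext w
    simp only [Finset.mem_filter, Finset.notMem_empty, iff_false, not_and]
    intro hw h0
    have he := eq_of_lev_eq_zero (htotv w) h0
    rw [← he] at hw
    exact hvT hw
  have hsle : ∀ i, (Sf.filter (fun w => lev A v w = i)).card
      ≤ (univ.filter (fun w => lev A v w = i)).card := by
    intro i
    apply Finset.card_le_card
    exact Finset.filter_subset_filter _ (Finset.filter_subset _ _)
  have hssum : ∑ i ∈ range (r+1), (Sf.filter (fun w => lev A v w = i)).card = Sf.card := by
    symm
    apply Finset.card_eq_sum_card_fiberwise (f := lev A v)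
    intro x _
    simp only [Finset.mem_coe, Finset.mem_range]
    have := hLle x; omega
  have harc := arcCard_eq_sum A
  have hvdeg : (univ.filter (fun w => A v w)).card
      ≤ (univ.filter (fun w => lev A v w = 1)).card := by
    apply Finset.card_le_card
    intro w hw
    simp only [Finset.mem_filter, Finset.mem_univ, true_and] at hw ⊢
    have h1 : lev A v w ≤ 1 := by
      have := lev_arc (htotv v) hw
      rw [hLv] at this; omega
    rcases Nat.lt_or_ge (lev A v w) 1 with h | h
    · exfalso
      have h0 : lev A v w = 0 := by omega
      have he := eq_of_lev_eq_zero (htotv w) h0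
      rw [← he] at hw
      exact hirr v hw
    · omega
  have hTdeg : ∀ u ∈ univ \ Sf,
      (univ.filter (fun w => A u w)).card + r ≤ Fintype.card V := by
    intro u hu
    simp only [hSf, Finset.mem_sdiff, Finset.mem_filter, Finset.mem_univ, true_and,
      not_not] at hu
    obtain ⟨k0, hk0⟩ := hu
    have htotu : ∀ x : V, ∃ k, ReachWithin A k u x :=
      fun x => ⟨k0 + r, reachWithin_trans hk0 (hv x)⟩
    have hsurju : ∀ i, i ≤ r → ∃ w, lev A u w = i := by
      have h := hall u
      simp only [outEccLe, not_forall] at h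
      obtain ⟨w0, hw0⟩ := h
      have hJ : r ≤ lev A u w0 := by
        by_contra hcon
        push_neg at hcon
        exact hw0 (reachWithin_mono (by omega) (lev_spec (htotu w0)))
      intro i hi
      exact exists_lev_eq htotu ⟨w0, rfl⟩ i (by omega)
    have hfib := fiber_one_card (lev A u) r (by omega) hsurju
    have hdle : (univ.filter (fun w => A u w)).card
        ≤ (univ.filter (fun w => lev A u w = 1)).card := by
      apply Finset.card_le_card
      intro w hw
      simp only [Finset.mem_filter, Finset.mem_univ, true_and] at hw ⊢
      have h1 : lev A u w ≤ 1 := by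
        have := lev_arc (htotu u) hw
        rw [lev_self] at this; omega
      rcases Nat.lt_or_ge (lev A u w) 1 with h | h
      · exfalso
        have h0 : lev A u w = 0 := by omega
        have he := eq_of_lev_eq_zero (htotu w) h0
        rw [← he] at hw
        exact hirr u hw
      · omega
    omega
  have hrho : ∀ m : ℕ, (Sf.filter (fun w => lev A v w ≤ m)).card
      = ∑ j ∈ (range (r+1)).filter (fun j => j ≤ m),
          (Sf.filter (fun w => lev A v w = j)).card := by
    intro m
    rw [Finset.card_eq_sum_card_fiberwise (f := lev A v)
        (t := (range (r+1)).filter (fun j => j ≤ m))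
        (fun x hx => by
          simp only [Finset.mem_coe, Finset.mem_filter, Finset.mem_range] at hx ⊢
          exact ⟨by have := hLle x; omega, hx.2⟩)]
    apply Finset.sum_congr rfl
    intro j hj
    congr 1
    have hjm : j ≤ m := (Finset.mem_filter.mp hj).2
    ext w
    simp only [Finset.mem_filter]
    constructor
    · rintro ⟨⟨hw, _⟩, hj'⟩; exact ⟨hw, hj'⟩
    · rintro ⟨hw, hj'⟩; exact ⟨⟨hw, by omega⟩, hj'⟩
  have hSdeg : ∀ u ∈ Sf, (univ.filter (fun w => A u w)).card + 1
      ≤ ∑ j ∈ (range (r+1)).filter (fun j => j ≤ lev A v u + 1),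
          (Sf.filter (fun w => lev A v w = j)).card := by
    intro u hu
    rw [← hrho (lev A v u + 1)]
    have hsub : univ.filter (fun w => A u w)
        ⊆ (Sf.filter (fun w => lev A v w ≤ lev A v u + 1)).erase u := by
      intro w hw
      simp only [Finset.mem_filter, Finset.mem_univ, true_and] at hw
      apply Finset.mem_erase.mpr
      constructor
      · intro he; rw [he] at hw; exact hirr u hw
      · exact Finset.mem_filter.mpr ⟨hSclosed u hu w hw, lev_arc (htotv u) hw⟩
    have h1 := Finset.card_le_card hsub
    have hmem : u ∈ Sf.filter (fun w => lev A v w ≤ lev A v u + 1) :=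
      Finset.mem_filter.mpr ⟨hu, by omega⟩
    have h2 := Finset.card_erase_of_mem hmem
    have h3 : 1 ≤ (Sf.filter (fun w => lev A v w ≤ lev A v u + 1)).card :=
      Finset.card_pos.mpr ⟨u, hmem⟩
    omega
  have hSsum : ∑ u ∈ Sf, (univ.filter (fun w => A u w)).card
      ≤ ∑ ℓ ∈ range (r+1), (Sf.filter (fun w => lev A v w = ℓ)).card *
          ((∑ j ∈ (range (r+1)).filter (fun j => j ≤ ℓ + 1),
            (Sf.filter (fun w => lev A v w = j)).card) - 1) := by
    have h1 : ∑ u ∈ Sf, (univ.filter (fun w => A u w)).card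
        ≤ ∑ u ∈ Sf, ((∑ j ∈ (range (r+1)).filter (fun j => j ≤ lev A v u + 1),
            (Sf.filter (fun w => lev A v w = j)).card) - 1) := by
      apply Finset.sum_le_sum
      intro u hu
      have := hSdeg u hu
      omega
    have h2 : ∑ u ∈ Sf, ((∑ j ∈ (range (r+1)).filter (fun j => j ≤ lev A v u + 1),
          (Sf.filter (fun w => lev A v w = j)).card) - 1)
        = ∑ ℓ ∈ range (r+1), ∑ u ∈ Sf.filter (fun w => lev A v w = ℓ),
            ((∑ j ∈ (range (r+1)).filter (fun j => j ≤ lev A v u + 1),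
              (Sf.filter (fun w => lev A v w = j)).card) - 1) := by
      symm
      apply Finset.sum_fiberwise_of_maps_to
      intro x _
      simp only [Finset.mem_range]
      have := hLle x; omega
    rw [h2] at h1
    refine le_trans h1 (le_of_eq ?_)
    apply Finset.sum_congr rfl
    intro ℓ hℓ
    have h3 : ∀ u ∈ Sf.filter (fun w => lev A v w = ℓ),
        ((∑ j ∈ (range (r+1)).filter (fun j => j ≤ lev A v u + 1),
          (Sf.filter (fun w => lev A v w = j)).card) - 1)
        = ((∑ j ∈ (range (r+1)).filter (fun j => j ≤ ℓ + 1),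
          (Sf.filter (fun w => lev A v w = j)).card) - 1) := by
      intro u hu
      have hue := (Finset.mem_filter.mp hu).2
      rw [hue]
    rw [Finset.sum_congr rfl h3, Finset.sum_const, smul_eq_mul]
  have hsplit : ∑ u : V, (univ.filter (fun w => A u w)).card
      = (∑ u ∈ univ \ Sf, (univ.filter (fun w => A u w)).card)
        + ∑ u ∈ Sf, (univ.filter (fun w => A u w)).card := by
    rw [Finset.sum_sdiff (Finset.subset_univ Sf)]
  have hvmem : v ∈ univ \ Sf := Finset.mem_sdiff.mpr ⟨Finset.mem_univ v, hvT⟩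
  have hTsplit : ∑ u ∈ univ \ Sf, (univ.filter (fun w => A u w)).card
      = (univ.filter (fun w => A v w)).card
        + ∑ u ∈ (univ \ Sf).erase v, (univ.filter (fun w => A u w)).card :=
    (Finset.add_sum_erase _ _ hvmem).symm
  have hTbound : ∑ u ∈ (univ \ Sf).erase v, (univ.filter (fun w => A u w)).card
      ≤ ((univ \ Sf).erase v).card * (Fintype.card V - r) := by
    have h := Finset.sum_le_card_nsmul ((univ \ Sf).erase v)
      (fun u => (univ.filter (fun w => A u w)).card) (Fintype.card V - r)
      (fun u hu => by
        beta_reduce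
        have := hTdeg u (Finset.mem_of_mem_erase hu)
        omega)
    simpa [smul_eq_mul] using h
  have hTcard : ((univ \ Sf).erase v).card = Fintype.card V - Sf.card - 1 := by
    rw [Finset.card_erase_of_mem hvmem, Finset.card_sdiff_of_subset (Finset.subset_univ Sf),
      Finset.card_univ]
  have hscle : Sf.card + 1 ≤ Fintype.card V := by
    have hsub : Sf ⊆ univ.erase v := by
      intro u hu
      exact Finset.mem_erase.mpr ⟨fun he => hvT (he ▸ hu), Finset.mem_univ u⟩
    have := Finset.card_le_card hsub
    rw [Finset.card_erase_of_mem (Finset.mem_univ v), Finset.card_univ] at this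
    omega
  have htotal : arcCard A ≤ (univ.filter (fun w => lev A v w = 1)).card
      + (Fintype.card V - Sf.card - 1) * (Fintype.card V - r)
      + ∑ ℓ ∈ range (r+1), (Sf.filter (fun w => lev A v w = ℓ)).card *
          ((∑ j ∈ (range (r+1)).filter (fun j => j ≤ ℓ + 1),
            (Sf.filter (fun w => lev A v w = j)).card) - 1) := by
    rw [harc, hsplit, hTsplit]
    rw [hTcard] at hTbound
    exact Nat.add_le_add (Nat.add_le_add hvdeg hTbound) hSsum
  -- the constant
  obtain ⟨m, rfl⟩ : ∃ m, r = m + 2 := ⟨r - 2, by omega⟩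
  have heven : Even (m * (m + 3)) := by
    rcases Nat.even_or_odd m with h | h
    · exact h.mul_right _
    · obtain ⟨t, ht⟩ := h
      exact ⟨(2*t + 1) * (t + 2), by subst ht; ring⟩
  obtain ⟨c, hcc⟩ := heven
  have hpow : (m+2)^2 - (m+2) - 2 = m*(m+3) := by
    have h1 : (m+2)^2 = m*m + 4*m + 4 := by ring
    have h2 : m*(m+3) = m*m + 3*m := by ring
    omega
  have hcdiv : ((m+2)^2 - (m+2) - 2) / 2 = c := by rw [hpow, hcc]; omega
  have hc2 : (2:ℤ) * ((((m+2)^2 - (m+2) - 2) / 2 : ℕ) : ℤ)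
      = (((m+2:ℕ):ℤ) - 2) * (((m+2:ℕ):ℤ) + 1) := by
    rw [hcdiv]
    have hcc' : (m:ℤ) * ((m:ℤ) + 3) = (c:ℤ) + (c:ℤ) := by exact_mod_cast hcc
    push_cast
    nlinarith [hcc']
  have hkey := key_numeric (m+2) hr _ hc2
    (fun i => (Sf.filter (fun w => lev A v w = i)).card)
    (fun i => (univ.filter (fun w => lev A v w = i)).card)
    hsle hnpos hs0 hn0
  beta_reduce at hkey
  have hncast : ((Fintype.card V : ℕ):ℤ)
      = ∑ ℓ ∈ range (m+2+1), ((univ.filter (fun w => lev A v w = ℓ)).card : ℤ) := by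
    rw [← hnsum]
    push_cast
    try rfl
  have hscast : ((Sf.card : ℕ):ℤ)
      = ∑ ℓ ∈ range (m+2+1), ((Sf.filter (fun w => lev A v w = ℓ)).card : ℤ) := by
    rw [← hssum]
    push_cast
    try rfl
  have hterm : ∀ ℓ ∈ range (m+2+1),
      (((Sf.filter (fun w => lev A v w = ℓ)).card *
        ((∑ j ∈ (range (m+2+1)).filter (fun j => j ≤ ℓ + 1),
          (Sf.filter (fun w => lev A v w = j)).card) - 1) : ℕ) : ℤ)
      = ((Sf.filter (fun w => lev A v w = ℓ)).card : ℤ) *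
        ((∑ j ∈ (range (m+2+1)).filter (fun j => j ≤ ℓ + 1),
          ((Sf.filter (fun w => lev A v w = j)).card : ℤ)) - 1) := by
    intro ℓ hℓ
    by_cases hz : (Sf.filter (fun w => lev A v w = ℓ)).card = 0
    · simp [hz]
    · have hmemf : ℓ ∈ (range (m+2+1)).filter (fun j => j ≤ ℓ + 1) :=
        Finset.mem_filter.mpr ⟨hℓ, by omega⟩
      have h1 : 1 ≤ ∑ j ∈ (range (m+2+1)).filter (fun j => j ≤ ℓ + 1),
          (Sf.filter (fun w => lev A v w = j)).card := by
        have h2 := Finset.single_le_sum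
          (f := fun j => (Sf.filter (fun w => lev A v w = j)).card)
          (fun j _ => Nat.zero_le _) hmemf
        beta_reduce at h2
        omega
      push_cast [Nat.cast_sub h1]
      ring
  have hStermcast : ((∑ ℓ ∈ range (m+2+1), (Sf.filter (fun w => lev A v w = ℓ)).card *
        ((∑ j ∈ (range (m+2+1)).filter (fun j => j ≤ ℓ + 1),
          (Sf.filter (fun w => lev A v w = j)).card) - 1) : ℕ) : ℤ)
      = ∑ ℓ ∈ range (m+2+1), ((Sf.filter (fun w => lev A v w = ℓ)).card : ℤ) *
        ((∑ j ∈ (range (m+2+1)).filter (fun j => j ≤ ℓ + 1),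
          ((Sf.filter (fun w => lev A v w = j)).card : ℤ)) - 1) := by
    rw [Nat.cast_sum]
    exact Finset.sum_congr rfl hterm
  have hfinal : (arcCard A : ℤ)
      ≤ (Fintype.card V : ℤ) * ((Fintype.card V : ℤ) - ((m+2:ℕ):ℤ))
        + ((((m+2)^2 - (m+2) - 2) / 2 : ℕ) : ℤ) := by
    have h0 : (arcCard A : ℤ) ≤ ((univ.filter (fun w => lev A v w = 1)).card : ℤ)
        + ((Fintype.card V - Sf.card - 1 : ℕ) : ℤ) * ((Fintype.card V - (m+2) : ℕ) : ℤ)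
        + ((∑ ℓ ∈ range (m+2+1), (Sf.filter (fun w => lev A v w = ℓ)).card *
            ((∑ j ∈ (range (m+2+1)).filter (fun j => j ≤ ℓ + 1),
              (Sf.filter (fun w => lev A v w = j)).card) - 1) : ℕ) : ℤ) := by
      exact_mod_cast htotal
    rw [hStermcast] at h0
    have hcast1 : ((Fintype.card V - Sf.card - 1 : ℕ) : ℤ)
        = (Fintype.card V : ℤ) - (Sf.card:ℤ) - 1 := by omega
    have hcast2 : ((Fintype.card V - (m+2) : ℕ) : ℤ)
        = (Fintype.card V:ℤ) - ((m+2:ℕ):ℤ) := by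
      have := hnr; omega
    rw [hcast1, hcast2] at h0
    rw [← hscast, ← hncast] at hkey
    have hid : ((Fintype.card V:ℤ) - (Sf.card:ℤ) - 1) * ((Fintype.card V:ℤ) - ((m+2:ℕ):ℤ))
        + (Sf.card:ℤ) * ((Fintype.card V:ℤ) - ((m+2:ℕ):ℤ))
        + ((Fintype.card V:ℤ) - ((m+2:ℕ):ℤ))
        = (Fintype.card V:ℤ) * ((Fintype.card V:ℤ) - ((m+2:ℕ):ℤ)) := by ring
    linarith [h0, hkey, hid]
  have hgoal : ((Fintype.card V * (Fintype.card V - (m+2)) + ((m+2)^2 - (m+2) - 2)/2 : ℕ) : ℤ)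
      = (Fintype.card V:ℤ) * ((Fintype.card V:ℤ) - ((m+2:ℕ):ℤ))
        + ((((m+2)^2 - (m+2) - 2)/2 : ℕ):ℤ) := by
    have hle2 : (m+2:ℕ) ≤ Fintype.card V := by omega
    push_cast [Nat.cast_sub hle2]
    ring
  rw [← hgoal] at hfinal
  exact_mod_cast hfinal
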